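/- arXiv:2209.05173 — 3 statements merged into one kernel-verified Lean document; each statement's English description precedes it below -/
import Mathlib

section
/- Let c, p ∈ ℝ² and let r_c > 0 with R := dist(p, c) > r_c (the reference point p lies outside the disk). Let X be a random point distributed uniformly on the closed disk of center c and radius r_c. Then the cumulative distribution function F(r) = P(dist(X, p) ≤ r) is differentiable at every r with R − r_c < r < R + r_c, and its derivative (the probability density of the distance dist(X, p)) equals f(r) = (2r/(π r_c²)) · arccos((R² + r² − r_c²)/(2 R r)). -/
open MeasureTheory Real Set

private lemma sqrt_re_im (z : ℂ) : Real.sqrt (z.re ^ 2 + z.im ^ 2) = ‖z‖ := by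
  rw [Complex.norm_def, Complex.normSq_apply]
  ring_nf

/-- Measure of the angular section of the circle. -/
private lemma theta_vol {t : ℝ} (ht : -1 < t) :
    volume {θ : ℝ | θ ∈ Set.Ioo (-π) π ∧ t ≤ Real.cos θ} =
      ENNReal.ofReal (2 * Real.arccos t) := by
  rcases le_or_gt t 1 with h1 | h1
  · have hc : Real.cos (Real.arccos t) = t := Real.cos_arccos ht.le h1
    have ha0 : 0 ≤ Real.arccos t := Real.arccos_nonneg t
    have hapi : Real.arccos t < π := by
      rcases lt_or_eq_of_le (Real.arccos_le_pi t) with h | h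
      · exact h
      · exact absurd (Real.arccos_eq_pi.1 h) (by linarith)
    have hset : {θ : ℝ | θ ∈ Set.Ioo (-π) π ∧ t ≤ Real.cos θ} =
        Set.Icc (-(Real.arccos t)) (Real.arccos t) := by
      ext θ
      simp only [Set.mem_setOf_eq, Set.mem_Ioo, Set.mem_Icc]
      constructor
      · rintro ⟨⟨h2, h3⟩, h4⟩
        have habs : |θ| ≤ π := abs_le.2 ⟨h2.le, h3.le⟩
        have h5 : Real.cos (Real.arccos t) ≤ Real.cos |θ| := by
          rw [hc, Real.cos_abs]; exact h4
        have := (Real.strictAntiOn_cos.le_iff_ge ⟨ha0, hapi.le⟩ ⟨abs_nonneg θ, habs⟩).1 h5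
        exact abs_le.1 this
      · rintro ⟨h2, h3⟩
        have habs : |θ| ≤ Real.arccos t := abs_le.2 ⟨h2, h3⟩
        have h6 : |θ| ≤ π := le_trans habs hapi.le
        refine ⟨⟨?_, ?_⟩, ?_⟩
        · have := neg_abs_le θ; linarith
        · have := le_abs_self θ; linarith
        · have h7 : Real.cos (Real.arccos t) ≤ Real.cos |θ| :=
            (Real.strictAntiOn_cos.le_iff_ge ⟨ha0, hapi.le⟩ ⟨abs_nonneg θ, h6⟩).2 habs
          rw [hc, Real.cos_abs] at h7
          exact h7
    rw [hset, Real.volume_Icc]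
    congr 1
    ring
  · have hset : {θ : ℝ | θ ∈ Set.Ioo (-π) π ∧ t ≤ Real.cos θ} = (∅ : Set ℝ) := by
      ext θ
      simp only [Set.mem_setOf_eq, Set.mem_empty_iff_false, iff_false, not_and]
      intro _
      intro h4
      have := Real.cos_le_one θ
      linarith
    rw [hset]
    have : Real.arccos t = 0 := Real.arccos_eq_zero.2 h1.le
    simp [this]

private lemma polar_vol {R r_c : ℝ} (hR0 : 0 < R) (hrc : 0 < r_c) (hout : r_c < R)
    {r' : ℝ} (hr' : 0 < r') :
    volume {q : ℝ × ℝ | Real.sqrt (q.1 ^ 2 + q.2 ^ 2) ≤ r' ∧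
        Real.sqrt ((q.1 - R) ^ 2 + q.2 ^ 2) ≤ r_c} =
      ENNReal.ofReal (∫ s in (0:ℝ)..r',
        2 * s * Real.arccos ((R ^ 2 + s ^ 2 - r_c ^ 2) / (2 * R * s))) := by
  set T : Set (ℝ × ℝ) := {q : ℝ × ℝ | Real.sqrt (q.1 ^ 2 + q.2 ^ 2) ≤ r' ∧
      Real.sqrt ((q.1 - R) ^ 2 + q.2 ^ 2) ≤ r_c} with hT
  have hTmeas : MeasurableSet T := by
    apply MeasurableSet.inter
    · exact (isClosed_le ((continuous_fst.pow 2).add (continuous_snd.pow 2)).sqrt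
        continuous_const).measurableSet
    · exact (isClosed_le (((continuous_fst.sub continuous_const).pow 2).add
        (continuous_snd.pow 2)).sqrt continuous_const).measurableSet
  -- finiteness
  have hTsub : T ⊆ Set.Icc (-r') r' ×ˢ Set.Icc (-r') r' := by
    rintro ⟨x, y⟩ ⟨h1, _⟩
    have hx : |x| ≤ r' := by
      calc |x| = Real.sqrt (x ^ 2) := (Real.sqrt_sq_eq_abs x).symm
      _ ≤ Real.sqrt (x ^ 2 + y ^ 2) := Real.sqrt_le_sqrt (by nlinarith [sq_nonneg y])
      _ ≤ r' := h1
    have hy : |y| ≤ r' := by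
      calc |y| = Real.sqrt (y ^ 2) := (Real.sqrt_sq_eq_abs y).symm
      _ ≤ Real.sqrt (x ^ 2 + y ^ 2) := Real.sqrt_le_sqrt (by nlinarith [sq_nonneg x])
      _ ≤ r' := h1
    exact ⟨abs_le.1 hx, abs_le.1 hy⟩
  have hTfin : volume T ≠ ⊤ := by
    refine ne_top_of_le_ne_top ?_ (measure_mono hTsub)
    exact ((isCompact_Icc.prod isCompact_Icc).measure_lt_top).ne
  set H : ℝ → ℝ := fun s => 2 * s * Real.arccos ((R ^ 2 + s ^ 2 - r_c ^ 2) / (2 * R * s))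
    with hH
  have hts : ∀ s : ℝ, 0 < s → -1 < (R ^ 2 + s ^ 2 - r_c ^ 2) / (2 * R * s) := by
    intro s hs
    rw [lt_div_iff₀ (by positivity)]
    have h1 : r_c < R + s := by linarith
    have h2 : r_c * r_c < (R + s) * (R + s) := mul_self_lt_mul_self hrc.le h1
    nlinarith [h2]
  have hkey : ∀ X : ℝ, 0 ≤ X → (Real.sqrt X ≤ r_c ↔ X ≤ r_c ^ 2) := by
    intro X hX
    constructor
    · intro h
      calc X = Real.sqrt X ^ 2 := (Real.sq_sqrt hX).symm
      _ ≤ r_c ^ 2 := pow_le_pow_left₀ (Real.sqrt_nonneg X) h 2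
    · intro h
      calc Real.sqrt X ≤ Real.sqrt (r_c ^ 2) := Real.sqrt_le_sqrt h
      _ = r_c := Real.sqrt_sq hrc.le
  have hmem : ∀ s θ : ℝ, 0 < s →
      (((s * Real.cos θ, s * Real.sin θ) : ℝ × ℝ) ∈ T ↔
        (s ≤ r' ∧ (R ^ 2 + s ^ 2 - r_c ^ 2) / (2 * R * s) ≤ Real.cos θ)) := by
    intro s θ hs
    have hpyth : Real.sin θ ^ 2 + Real.cos θ ^ 2 = 1 := Real.sin_sq_add_cos_sq θ
    have e1 : (s * Real.cos θ) ^ 2 + (s * Real.sin θ) ^ 2 = s ^ 2 := by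
      have e : (s * Real.cos θ) ^ 2 + (s * Real.sin θ) ^ 2
          = s ^ 2 * (Real.sin θ ^ 2 + Real.cos θ ^ 2) := by ring
      rw [e, hpyth, mul_one]
    have e2 : (s * Real.cos θ - R) ^ 2 + (s * Real.sin θ) ^ 2
        = s ^ 2 + R ^ 2 - 2 * R * s * Real.cos θ := by
      have e : (s * Real.cos θ - R) ^ 2 + (s * Real.sin θ) ^ 2
          = s ^ 2 * (Real.sin θ ^ 2 + Real.cos θ ^ 2) + R ^ 2
            - 2 * R * s * Real.cos θ := by ring
      rw [e, hpyth, mul_one]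
    have hX : (0:ℝ) ≤ (s * Real.cos θ - R) ^ 2 + (s * Real.sin θ) ^ 2 := by positivity
    have hiff2 : Real.sqrt ((s * Real.cos θ - R) ^ 2 + (s * Real.sin θ) ^ 2) ≤ r_c ↔
        (R ^ 2 + s ^ 2 - r_c ^ 2) / (2 * R * s) ≤ Real.cos θ := by
      rw [hkey _ hX, e2, div_le_iff₀ (by positivity)]
      constructor
      · intro h; linarith
      · intro h; linarith
    constructor
    · rintro ⟨h1, h2⟩
      rw [e1, Real.sqrt_sq hs.le] at h1
      exact ⟨h1, hiff2.1 h2⟩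
    · rintro ⟨h1, h2⟩
      refine ⟨?_, hiff2.2 h2⟩
      rw [e1, Real.sqrt_sq hs.le]
      exact h1
  set f : ℝ × ℝ → ℝ := fun pq =>
    pq.1 * T.indicator (1 : ℝ × ℝ → ℝ) (pq.1 * Real.cos pq.2, pq.1 * Real.sin pq.2) with hf
  have h1 : (volume T).toReal = ∫ q : ℝ × ℝ, T.indicator (1 : ℝ × ℝ → ℝ) q :=
    (integral_indicator_one hTmeas).symm
  have h2 : ∫ q : ℝ × ℝ, T.indicator (1 : ℝ × ℝ → ℝ) q
      = ∫ pq in polarCoord.target, pq.1 • T.indicator (1 : ℝ × ℝ → ℝ) (polarCoord.symm pq) :=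
    (integral_comp_polarCoord_symm (T.indicator (1 : ℝ × ℝ → ℝ))).symm
  have h3 : ∫ pq in polarCoord.target, pq.1 • T.indicator (1 : ℝ × ℝ → ℝ) (polarCoord.symm pq)
      = ∫ pq in Set.Ioi (0:ℝ) ×ˢ Set.Ioo (-π) π, f pq := by
    rw [show polarCoord.target = Set.Ioi (0:ℝ) ×ˢ Set.Ioo (-π) π from rfl]
    rfl
  have hf_meas : Measurable f := by
    apply measurable_fst.mul
    have hc : Measurable (fun pq : ℝ × ℝ =>
        ((pq.1 * Real.cos pq.2, pq.1 * Real.sin pq.2) : ℝ × ℝ)) := by fun_prop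
    exact (measurable_one.indicator hTmeas).comp hc
  set A : Set (ℝ × ℝ) := Set.Ioc (0:ℝ) r' ×ˢ Set.Ioo (-π) π with hA
  have hAmeas : MeasurableSet A := measurableSet_Ioc.prod measurableSet_Ioo
  have hAfin : volume A < ⊤ := by
    have hsub : A ⊆ Set.Icc (0:ℝ) r' ×ˢ Set.Icc (-π) π :=
      Set.prod_mono Set.Ioc_subset_Icc_self Set.Ioo_subset_Icc_self
    exact (measure_mono hsub).trans_lt (isCompact_Icc.prod isCompact_Icc).measure_lt_top
  have hbound : Integrable (A.indicator (fun _ => r'))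
      (volume.restrict (Set.Ioi (0:ℝ) ×ˢ Set.Ioo (-π) π)) :=
    ((integrable_indicator_iff hAmeas).2 (integrableOn_const hAfin.ne)).restrict
  have hf_int : IntegrableOn f (Set.Ioi (0:ℝ) ×ˢ Set.Ioo (-π) π) := by
    refine Integrable.mono' hbound hf_meas.aestronglyMeasurable.restrict ?_
    refine (ae_restrict_iff' (measurableSet_Ioi.prod measurableSet_Ioo)).2 (ae_of_all _ ?_)
    rintro ⟨s, θ⟩ ⟨hs, hθ⟩
    simp only [Real.norm_eq_abs]
    by_cases hle : s ≤ r'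
    · have hmemA : ((s, θ) : ℝ × ℝ) ∈ A := Set.mem_prod.2 ⟨⟨hs, hle⟩, hθ⟩
      rw [Set.indicator_of_mem hmemA]
      by_cases hmemT : ((s * Real.cos θ, s * Real.sin θ) : ℝ × ℝ) ∈ T
      · rw [hf]
        simp only
        rw [Set.indicator_of_mem hmemT, Pi.one_apply, mul_one, abs_of_pos hs]
        exact hle
      · rw [hf]
        simp only
        rw [Set.indicator_of_notMem hmemT, mul_zero, abs_zero]
        exact hr'.le
    · have hnT : ((s * Real.cos θ, s * Real.sin θ) : ℝ × ℝ) ∉ T :=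
        fun hm => hle ((hmem s θ hs).1 hm).1
      rw [hf]
      simp only
      rw [Set.indicator_of_notMem hnT, mul_zero, abs_zero]
      exact Set.indicator_nonneg (fun _ _ => hr'.le) _
  have h4 : ∫ pq in Set.Ioi (0:ℝ) ×ˢ Set.Ioo (-π) π, f pq
      = ∫ s in Set.Ioi (0:ℝ), ∫ θ in Set.Ioo (-π) π, f (s, θ) := by
    rw [Measure.volume_eq_prod]
    rw [Measure.volume_eq_prod] at hf_int
    exact setIntegral_prod f hf_int
  have h5 : ∀ s ∈ Set.Ioi (0:ℝ),
      (∫ θ in Set.Ioo (-π) π, f (s, θ)) = (Set.Ioc (0:ℝ) r').indicator H s := by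
    intro s hs
    have hs' : 0 < s := hs
    by_cases hle : s ≤ r'
    · rw [Set.indicator_of_mem (Set.mem_Ioc.2 ⟨hs', hle⟩)]
      set B : Set ℝ := {θ : ℝ | (R ^ 2 + s ^ 2 - r_c ^ 2) / (2 * R * s) ≤ Real.cos θ} with hB
      have hBmeas : MeasurableSet B :=
        measurableSet_le measurable_const Real.continuous_cos.measurable
      have hfg : ∀ θ, f (s, θ) = s * B.indicator (1 : ℝ → ℝ) θ := by
        intro θ
        rw [hf]
        simp only
        congr 1
        by_cases hθB : θ ∈ B
        · rw [Set.indicator_of_mem hθB, Set.indicator_of_mem ((hmem s θ hs').2 ⟨hle, hθB⟩)]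
          rfl
        · rw [Set.indicator_of_notMem hθB,
            Set.indicator_of_notMem (fun hm => hθB ((hmem s θ hs').1 hm).2)]
      calc ∫ θ in Set.Ioo (-π) π, f (s, θ)
          = ∫ θ in Set.Ioo (-π) π, s * B.indicator (1 : ℝ → ℝ) θ := by simp only [hfg]
      _ = s * ∫ θ in Set.Ioo (-π) π, B.indicator (1 : ℝ → ℝ) θ := integral_const_mul s _
      _ = s * ∫ θ in Set.Ioo (-π) π ∩ B, ((1 : ℝ → ℝ) θ) := by
          rw [setIntegral_indicator hBmeas]
      _ = s * (volume (Set.Ioo (-π) π ∩ B)).toReal := by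
          simp only [Pi.one_apply]
          rw [setIntegral_const, smul_eq_mul, mul_one, measureReal_def]
      _ = s * (2 * Real.arccos ((R ^ 2 + s ^ 2 - r_c ^ 2) / (2 * R * s))) := by
          have hIB : Set.Ioo (-π) π ∩ B
              = {θ : ℝ | θ ∈ Set.Ioo (-π) π ∧
                  (R ^ 2 + s ^ 2 - r_c ^ 2) / (2 * R * s) ≤ Real.cos θ} := rfl
          rw [hIB, theta_vol (hts s hs'), ENNReal.toReal_ofReal
            (mul_nonneg zero_le_two (Real.arccos_nonneg _))]
      _ = H s := by rw [hH]; ring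
    · rw [Set.indicator_of_notMem (fun hm => hle hm.2)]
      have hz : ∀ θ, f (s, θ) = 0 := by
        intro θ
        rw [hf]
        simp only
        rw [Set.indicator_of_notMem (fun hm => hle ((hmem s θ hs').1 hm).1), mul_zero]
      simp only [hz, integral_zero]
  have h6 : ∫ s in Set.Ioi (0:ℝ), (Set.Ioc (0:ℝ) r').indicator H s
      = ∫ s in (0:ℝ)..r', H s := by
    rw [setIntegral_indicator measurableSet_Ioc,
      Set.inter_eq_self_of_subset_right Set.Ioc_subset_Ioi_self,
      intervalIntegral.integral_of_le hr'.le]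
  have hfinal : (volume T).toReal = ∫ s in (0:ℝ)..r', H s := by
    rw [h1, h2, h3, h4, setIntegral_congr_fun measurableSet_Ioi h5, h6]
  rw [← ENNReal.ofReal_toReal hTfin, hfinal]

private lemma euclid_vol (c p : EuclideanSpace ℝ (Fin 2)) {R : ℝ} (hR : R = dist p c)
    (hR0 : 0 < R) (r_c r' : ℝ) :
    volume ({x : EuclideanSpace ℝ (Fin 2) | dist x p ≤ r'} ∩ Metric.closedBall c r_c) =
      volume {q : ℝ × ℝ | Real.sqrt (q.1 ^ 2 + q.2 ^ 2) ≤ r' ∧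
        Real.sqrt ((q.1 - R) ^ 2 + q.2 ^ 2) ≤ r_c} := by
  set T : Set (ℝ × ℝ) := {q : ℝ × ℝ | Real.sqrt (q.1 ^ 2 + q.2 ^ 2) ≤ r' ∧
      Real.sqrt ((q.1 - R) ^ 2 + q.2 ^ 2) ≤ r_c} with hT
  have hTmeas : MeasurableSet T := by
    apply MeasurableSet.inter
    · exact (isClosed_le ((continuous_fst.pow 2).add (continuous_snd.pow 2)).sqrt
        continuous_const).measurableSet
    · exact (isClosed_le (((continuous_fst.sub continuous_const).pow 2).add
        (continuous_snd.pow 2)).sqrt continuous_const).measurableSet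
  set ℓ : EuclideanSpace ℝ (Fin 2) ≃ₗᵢ[ℝ] ℂ := Complex.orthonormalBasisOneI.repr.symm with hℓ
  set w : ℂ := ℓ c - ℓ p with hwdef
  have habsw : ‖w‖ = R := by
    rw [hwdef, ← map_sub, ℓ.norm_map, ← dist_eq_norm, hR, dist_comm]
  have hw0 : w ≠ 0 := by
    intro h
    rw [h, norm_zero] at habsw
    linarith
  set u : ℂ := (R : ℂ) / w with hudef
  have habsu : ‖u‖ = 1 := by
    rw [hudef, norm_div, Complex.norm_real, Real.norm_eq_abs, habsw, abs_of_pos hR0, div_self hR0.ne']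
  set uc : Circle := ⟨u, mem_sphere_zero_iff_norm.2 (by rw [habsu])⟩
    with huc
  set Φ : EuclideanSpace ℝ (Fin 2) → ℂ := fun x => u * (ℓ x - ℓ p) with hΦ
  have mpΦ : MeasurePreserving Φ volume volume := by
    have m1 : MeasurePreserving (⇑ℓ) volume volume := ℓ.measurePreserving
    have m2 : MeasurePreserving (fun z : ℂ => z - ℓ p) volume volume := by
      simpa [sub_eq_add_neg] using measurePreserving_add_right (volume : Measure ℂ) (-(ℓ p))
    have m3 : MeasurePreserving (fun z : ℂ => u * z) volume volume := by
      have h := (rotation uc).measurePreserving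
      have hcoe : ⇑(rotation uc) = fun z : ℂ => u * z := by
        funext z
        rw [rotation_apply]
      rwa [hcoe] at h
    exact m3.comp (m2.comp m1)
  have mpΨ : MeasurePreserving (fun x => Complex.measurableEquivRealProd (Φ x))
      volume volume :=
    Complex.volume_preserving_equiv_real_prod.comp mpΦ
  have habsΦ : ∀ x, ‖Φ x‖ = dist x p := by
    intro x
    rw [hΦ]
    simp only
    rw [norm_mul, habsu, one_mul, ← map_sub, ℓ.norm_map, ← dist_eq_norm]
  have hΦc : Φ c = (R : ℂ) := by
    rw [hΦ]
    simp only
    rw [← hwdef, hudef, div_mul_cancel₀ _ hw0]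
  have habsΦ2 : ∀ x, ‖Φ x - (R:ℂ)‖ = dist x c := by
    intro x
    have he : Φ x - (R:ℂ) = u * (ℓ x - ℓ c) := by
      rw [← hΦc, hΦ]
      ring
    rw [he, norm_mul, habsu, one_mul, ← map_sub, ℓ.norm_map,
      ← dist_eq_norm]
  have hpre : {x : EuclideanSpace ℝ (Fin 2) | dist x p ≤ r'} ∩ Metric.closedBall c r_c
      = (fun x => Complex.measurableEquivRealProd (Φ x)) ⁻¹' T := by
    ext x
    have hre : (Complex.measurableEquivRealProd (Φ x)) = ((Φ x).re, (Φ x).im) := rfl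
    have e1 : Real.sqrt (((Φ x).re) ^ 2 + ((Φ x).im) ^ 2) = dist x p := by
      rw [sqrt_re_im, habsΦ]
    have e2 : Real.sqrt (((Φ x).re - R) ^ 2 + ((Φ x).im) ^ 2) = dist x c := by
      have h := sqrt_re_im (Φ x - (R:ℂ))
      rw [Complex.sub_re, Complex.sub_im, Complex.ofReal_re, Complex.ofReal_im, sub_zero] at h
      rw [h, habsΦ2]
    simp only [Set.mem_inter_iff, Set.mem_setOf_eq, Metric.mem_closedBall, Set.mem_preimage,
      hre, hT, Prod.fst, Prod.snd]
    rw [e1, e2]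
  rw [hpre, mpΨ.measure_preimage hTmeas.nullMeasurableSet]

/-- Lemma 1 of the paper, case `R > r_c`.
Let `X` be a point uniformly distributed on the closed disk of center `c` and radius `r_c`
in `ℝ²` (law: Lebesgue measure restricted to the disk, normalized by its area `π r_c²`).
If the reference point `p` lies outside the disk (`R := dist p c > r_c`), then the CDF
`F r = P(dist X p ≤ r)` is differentiable at every `r ∈ (R − r_c, R + r_c)` with derivative
`(2 r / (π r_c²)) · arccos ((R² + r² − r_c²) / (2 R r))`. -/
theorem uniform_disk_distance_density_outside
    (c p : EuclideanSpace ℝ (Fin 2)) (r_c : ℝ) (hrc : 0 < r_c)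
    (R : ℝ) (hR : R = dist p c) (hout : r_c < R)
    (μ : Measure (EuclideanSpace ℝ (Fin 2)))
    (hμ : μ = (ENNReal.ofReal (π * r_c ^ 2))⁻¹ •
      (volume.restrict (Metric.closedBall c r_c)))
    (F : ℝ → ℝ) (hF : ∀ r, F r = (μ {x | dist x p ≤ r}).toReal)
    (r : ℝ) (hr₁ : R - r_c < r) (hr₂ : r < R + r_c) :
    HasDerivAt F (2 * r / (π * r_c ^ 2) *
      Real.arccos ((R ^ 2 + r ^ 2 - r_c ^ 2) / (2 * R * r))) r := by
  have hR0 : 0 < R := hrc.trans hout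
  have hr0 : 0 < r := by linarith
  set H : ℝ → ℝ := fun s => 2 * s * Real.arccos ((R ^ 2 + s ^ 2 - r_c ^ 2) / (2 * R * s))
    with hH
  have hinner : Measurable fun s : ℝ => (R ^ 2 + s ^ 2 - r_c ^ 2) / (2 * R * s) :=
    Measurable.div (by fun_prop) (by fun_prop)
  have hHmeas : Measurable H :=
    (measurable_const.mul measurable_id).mul (Real.continuous_arccos.measurable.comp hinner)
  have hInt : IntervalIntegrable H volume 0 r := by
    rw [intervalIntegrable_iff_integrableOn_Ioc_of_le hr0.le]
    have hb : Integrable (fun _ : ℝ => 2 * r * π) (volume.restrict (Set.Ioc (0:ℝ) r)) :=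
      integrableOn_const measure_Ioc_lt_top.ne
    refine Integrable.mono' hb hHmeas.aestronglyMeasurable.restrict ?_
    refine (ae_restrict_iff' measurableSet_Ioc).2 (ae_of_all _ ?_)
    intro s hs
    have h1 : 0 ≤ Real.arccos ((R ^ 2 + s ^ 2 - r_c ^ 2) / (2 * R * s)) :=
      Real.arccos_nonneg _
    have h2 : Real.arccos ((R ^ 2 + s ^ 2 - r_c ^ 2) / (2 * R * s)) ≤ π :=
      Real.arccos_le_pi _
    rw [Real.norm_eq_abs, hH]
    simp only
    rw [abs_of_nonneg (mul_nonneg (by linarith [hs.1]) h1)]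
    calc 2 * s * Real.arccos ((R ^ 2 + s ^ 2 - r_c ^ 2) / (2 * R * s))
        ≤ 2 * r * Real.arccos ((R ^ 2 + s ^ 2 - r_c ^ 2) / (2 * R * s)) := by
          have := hs.2
          nlinarith
    _ ≤ 2 * r * π := by nlinarith
  have hContinner : ContinuousAt (fun s : ℝ => (R ^ 2 + s ^ 2 - r_c ^ 2) / (2 * R * s)) r :=
    ContinuousAt.div (by fun_prop) (by fun_prop) (by positivity)
  have hCont : ContinuousAt H r :=
    ((continuous_const.mul continuous_id).continuousAt).mul
      (Real.continuous_arccos.continuousAt.comp hContinner)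
  have hFTC : HasDerivAt (fun u => ∫ s in (0:ℝ)..u, H s) (H r) r :=
    intervalIntegral.integral_hasDerivAt_right hInt
      hHmeas.stronglyMeasurable.stronglyMeasurableAtFilter hCont
  have hG : HasDerivAt (fun u => (π * r_c ^ 2)⁻¹ * ∫ s in (0:ℝ)..u, H s)
      ((π * r_c ^ 2)⁻¹ * H r) r := hFTC.const_mul _
  have hEv : F =ᶠ[nhds r] fun u => (π * r_c ^ 2)⁻¹ * ∫ s in (0:ℝ)..u, H s := by
    filter_upwards [isOpen_Ioi.mem_nhds (show r ∈ Set.Ioi (0:ℝ) from hr0)] with r' hr'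
    have hr'' : (0:ℝ) < r' := hr'
    have hint_nonneg : 0 ≤ ∫ s in (0:ℝ)..r', H s := by
      apply intervalIntegral.integral_nonneg hr''.le
      intro s hs
      exact mul_nonneg (by linarith [hs.1]) (Real.arccos_nonneg _)
    have hSmeas : MeasurableSet {x : EuclideanSpace ℝ (Fin 2) | dist x p ≤ r'} :=
      (isClosed_le (continuous_id.dist continuous_const) continuous_const).measurableSet
    rw [hF r', hμ]
    rw [Measure.smul_apply, Measure.restrict_apply hSmeas, smul_eq_mul,
      euclid_vol c p hR hR0 r_c r', polar_vol hR0 hrc hout hr'',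
      ENNReal.toReal_mul, ENNReal.toReal_inv, ENNReal.toReal_ofReal (by positivity),
      ENNReal.toReal_ofReal hint_nonneg]
  have hd : HasDerivAt F ((π * r_c ^ 2)⁻¹ * H r) r :=
    HasDerivAt.congr_of_eventuallyEq hG hEv
  convert hd using 1
  rw [hH]
  ring
end

section
/- Let c, p ∈ ℝ² and let r_c > 0 with R := dist(p, c) ≤ r_c and R > 0. Let X be a random point distributed uniformly on the closed disk of center c and radius r_c. Then the cumulative distribution function F(r) = P(dist(X, p) ≤ r) is differentiable at every r with r_c − R < r < r_c + R, and its derivative equals f(r) = (2r/(π r_c²)) · arccos((R² + r² − r_c²)/(2 R r)). -/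
open MeasureTheory Real

open Set

noncomputable section UDDAux

/-- The lens-shaped region in `ℝ × ℝ`. -/
def discS (R r_c r : ℝ) : Set (ℝ × ℝ) :=
  {q | q.1 ^ 2 + q.2 ^ 2 ≤ r ^ 2 ∧ (q.1 - R) ^ 2 + q.2 ^ 2 ≤ r_c ^ 2}

lemma isClosed_discS (R r_c r : ℝ) : IsClosed (discS R r_c r) := by
  have h : discS R r_c r = {q : ℝ × ℝ | q.1 ^ 2 + q.2 ^ 2 ≤ r ^ 2} ∩
      {q : ℝ × ℝ | (q.1 - R) ^ 2 + q.2 ^ 2 ≤ r_c ^ 2} := rfl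
  rw [h]
  exact (isClosed_le (by fun_prop) continuous_const).inter
    (isClosed_le (by fun_prop) continuous_const)

lemma measurableSet_discS (R r_c r : ℝ) : MeasurableSet (discS R r_c r) :=
  (isClosed_discS R r_c r).measurableSet

lemma volume_discS_lt_top (R r_c r : ℝ) (hrc : 0 ≤ r_c) : volume (discS R r_c r) < ⊤ := by
  have hsub : discS R r_c r ⊆ Icc (R - r_c, -r_c) (R + r_c, r_c) := by
    rintro ⟨x, y⟩ ⟨-, h2⟩
    simp only [discS, mem_setOf_eq] at h2
    simp only [Icc_prod_eq, mem_prod, mem_Icc]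
    constructor
    · constructor <;> nlinarith [sq_nonneg y, sq_nonneg (x - R)]
    · constructor <;> nlinarith [sq_nonneg (x - R), sq_nonneg y]
  exact lt_of_le_of_lt (measure_mono hsub) isCompact_Icc.measure_lt_top

lemma arccos_lt_pi' {t : ℝ} (h1 : -1 < t) (h2 : t ≤ 1) : Real.arccos t < π := by
  rcases lt_or_eq_of_le (Real.arccos_le_pi t) with h | h
  · exact h
  · exfalso
    have := Real.cos_arccos h1.le h2
    rw [h, Real.cos_pi] at this
    linarith

lemma cos_angle_set {t : ℝ} (h1 : -1 < t) (h2 : t ≤ 1) :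
    Ioo (-π) π ∩ {θ | t ≤ Real.cos θ} = Icc (-Real.arccos t) (Real.arccos t) := by
  have ha0 : 0 ≤ Real.arccos t := Real.arccos_nonneg t
  have hapi : Real.arccos t < π := arccos_lt_pi' h1 h2
  have hca : Real.cos (Real.arccos t) = t := Real.cos_arccos h1.le h2
  ext θ
  simp only [mem_inter_iff, mem_Ioo, mem_setOf_eq, mem_Icc]
  constructor
  · rintro ⟨⟨hθ1, hθ2⟩, ht⟩
    have habs : |θ| ≤ Real.arccos t := by
      by_contra h
      push_neg at h
      have hc : Real.cos |θ| < Real.cos (Real.arccos t) :=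
        Real.strictAntiOn_cos ⟨ha0, Real.arccos_le_pi t⟩
          ⟨abs_nonneg θ, (abs_lt.mpr ⟨hθ1, hθ2⟩).le⟩ h
      rw [Real.cos_abs, hca] at hc
      linarith
    exact abs_le.mp habs
  · rintro ⟨hl, hu⟩
    have habs : |θ| ≤ Real.arccos t := abs_le.mpr ⟨hl, hu⟩
    refine ⟨⟨by linarith, by linarith⟩, ?_⟩
    have hc : Real.cos (Real.arccos t) ≤ Real.cos |θ| :=
      Real.cos_le_cos_of_nonneg_of_le_pi (abs_nonneg θ) (Real.arccos_le_pi t) habs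
    rw [Real.cos_abs, hca] at hc
    exact hc

lemma mem_discS_polar {R r_c ρ s θ : ℝ} (hR : 0 < R) (hs : 0 < s) (hρ : 0 ≤ ρ) :
    (s * Real.cos θ, s * Real.sin θ) ∈ discS R r_c ρ ↔
      (s ≤ ρ ∧ (R ^ 2 + s ^ 2 - r_c ^ 2) / (2 * R * s) ≤ Real.cos θ) := by
  have hpyth := Real.sin_sq_add_cos_sq θ
  have h2Rs : 0 < 2 * R * s := by positivity
  have key1 : (s * Real.cos θ) ^ 2 + (s * Real.sin θ) ^ 2 = s ^ 2 := by
    linear_combination s ^ 2 * hpyth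
  have key2 : (s * Real.cos θ - R) ^ 2 + (s * Real.sin θ) ^ 2
      = s ^ 2 - 2 * R * s * Real.cos θ + R ^ 2 := by
    linear_combination s ^ 2 * hpyth
  simp only [discS, mem_setOf_eq]
  rw [div_le_iff₀ h2Rs, key1, key2]
  constructor
  · rintro ⟨ha, hb⟩
    refine ⟨?_, by nlinarith⟩
    nlinarith
  · rintro ⟨ha, hb⟩
    exact ⟨by nlinarith, by nlinarith⟩

lemma discS_diff_integral (R r_c : ℝ) (hR : 0 < R) (hrc : 0 < r_c) (hin : R ≤ r_c)
    (r₁ r₂ : ℝ) (h1 : r_c - R < r₁) (h12 : r₁ ≤ r₂) (h2 : r₂ < r_c + R) :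
    (volume (discS R r_c r₂)).toReal - (volume (discS R r_c r₁)).toReal
      = ∫ s in r₁..r₂, 2 * s * Real.arccos ((R ^ 2 + s ^ 2 - r_c ^ 2) / (2 * R * s)) := by
  have hr₁0 : 0 ≤ r₁ := by linarith
  set tf : ℝ → ℝ := fun s => (R ^ 2 + s ^ 2 - r_c ^ 2) / (2 * R * s) with htf
  set C : Set (ℝ × ℝ) := {q | tf q.1 ≤ Real.cos q.2} with hCdef
  have hmC : MeasurableSet C := by
    apply measurableSet_le
    · exact ((measurable_const.add (measurable_fst.pow_const 2)).sub
        measurable_const).div (measurable_const.mul measurable_fst)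
    · exact Real.continuous_cos.measurable.comp measurable_snd
  set W : Set (ℝ × ℝ) := (Ioc r₁ r₂ ×ˢ Ioo (-π) π) ∩ C with hWdef
  have hmW : MeasurableSet W := (measurableSet_Ioc.prod measurableSet_Ioo).inter hmC
  have hsub : discS R r_c r₁ ⊆ discS R r_c r₂ := fun q hq =>
    ⟨le_trans hq.1 (by nlinarith), hq.2⟩
  have hfin2 := (volume_discS_lt_top R r_c r₂ hrc.le).ne
  set D := discS R r_c r₂ \ discS R r_c r₁ with hDdef
  have hmD : MeasurableSet D :=
    (measurableSet_discS R r_c r₂).diff (measurableSet_discS R r_c r₁)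
  have hvol : (volume (discS R r_c r₂)).toReal - (volume (discS R r_c r₁)).toReal
      = (volume D).toReal := by
    rw [hDdef, measure_diff hsub (measurableSet_discS R r_c r₁).nullMeasurableSet
        ((lt_of_le_of_lt (measure_mono hsub) (volume_discS_lt_top R r_c r₂ hrc.le)).ne),
      ENNReal.toReal_sub_of_le (measure_mono hsub) hfin2]
  rw [hvol]
  have hint : (volume D).toReal = ∫ q, D.indicator (fun _ => (1 : ℝ)) q :=
    (integral_indicator_one hmD).symm
  rw [hint, ← integral_comp_polarCoord_symm]
  have hWsubT : W ⊆ polarCoord.target := by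
    rintro ⟨s, θ⟩ ⟨hq, -⟩
    rw [polarCoord_target]
    exact ⟨lt_of_le_of_lt hr₁0 hq.1.1, hq.2⟩
  have hstep : ∀ q ∈ polarCoord.target,
      q.1 • D.indicator (fun _ => (1 : ℝ)) (polarCoord.symm q)
        = W.indicator (fun q : ℝ × ℝ => q.1) q := by
    rintro ⟨s, θ⟩ hq
    rw [polarCoord_target] at hq
    have hs : 0 < s := hq.1
    have hθ : θ ∈ Ioo (-π) π := hq.2
    have hsymm : polarCoord.symm (s, θ) = (s * Real.cos θ, s * Real.sin θ) := by
      simp [polarCoord_symm_apply]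
    have hmem : polarCoord.symm (s, θ) ∈ D ↔ (s, θ) ∈ W := by
      rw [hsymm, hDdef, mem_diff, mem_discS_polar hR hs (le_trans hr₁0 h12),
        mem_discS_polar hR hs hr₁0]
      constructor
      · rintro ⟨⟨ha, hb⟩, hc⟩
        have hr₁s : r₁ < s := by
          by_contra hle
          exact hc ⟨le_of_not_gt hle, hb⟩
        exact ⟨⟨⟨hr₁s, ha⟩, hθ⟩, hb⟩
      · rintro ⟨⟨hsr, -⟩, hb⟩
        exact ⟨⟨hsr.2, hb⟩, fun hcon => absurd hcon.1 (not_le.mpr hsr.1)⟩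
    by_cases hmemW : (s, θ) ∈ W
    · rw [indicator_of_mem hmemW, indicator_of_mem (hmem.mpr hmemW), smul_eq_mul, mul_one]
    · rw [indicator_of_notMem hmemW, indicator_of_notMem (fun h => hmemW (hmem.mp h)),
        smul_eq_mul, mul_zero]
  rw [setIntegral_congr_fun polarCoord.open_target.measurableSet hstep,
    setIntegral_indicator hmW, inter_eq_self_of_subset_right hWsubT, hWdef,
    ← setIntegral_indicator hmC, Measure.volume_eq_prod]
  have hintg : IntegrableOn (fun q : ℝ × ℝ => C.indicator (fun q : ℝ × ℝ => q.1) q)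
      (Ioc r₁ r₂ ×ˢ Ioo (-π) π) (volume.prod volume) := by
    apply Measure.integrableOn_of_bounded (M := r₂)
    · rw [Measure.prod_prod]
      exact ENNReal.mul_ne_top measure_Ioc_lt_top.ne measure_Ioo_lt_top.ne
    · exact (measurable_fst.indicator hmC).aestronglyMeasurable
    · rw [ae_restrict_iff' ((measurableSet_Ioc.prod measurableSet_Ioo))]
      filter_upwards with q hq
      have h1' : q.1 ∈ Ioc r₁ r₂ := hq.1
      calc ‖C.indicator (fun q : ℝ × ℝ => q.1) q‖ ≤ ‖q.1‖ := norm_indicator_le_norm_self _ _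
        _ ≤ r₂ := by
            rw [Real.norm_eq_abs, abs_le]
            exact ⟨by linarith [h1'.1], h1'.2⟩
  rw [setIntegral_prod _ hintg, intervalIntegral.integral_of_le h12]
  apply setIntegral_congr_fun measurableSet_Ioc
  intro s hs
  have hs0 : 0 < s := lt_of_le_of_lt hr₁0 hs.1
  have h2Rs : 0 < 2 * R * s := by positivity
  have hlb : -1 < tf s := by
    rw [htf]
    simp only
    rw [lt_div_iff₀ h2Rs]
    nlinarith [hs.1, h1, hrc]
  have hub : tf s ≤ 1 := by
    rw [htf]
    simp only
    rw [div_le_iff₀ h2Rs]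
    nlinarith [hs.2, h2, hin, hs0]
  have hθfun : ∀ θ : ℝ, C.indicator (fun q : ℝ × ℝ => q.1) (s, θ)
      = ({θ' : ℝ | tf s ≤ Real.cos θ'}).indicator (fun _ => s) θ := by
    intro θ
    by_cases h : tf s ≤ Real.cos θ
    · rw [indicator_of_mem (by exact h) , indicator_of_mem (by exact h)]
    · rw [indicator_of_notMem (by exact h), indicator_of_notMem (by exact h)]
  simp only [hθfun]
  rw [setIntegral_indicator (measurableSet_le measurable_const Real.continuous_cos.measurable),
    setIntegral_const, cos_angle_set hlb hub, Real.volume_real_Icc]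
  have ha0 : 0 ≤ Real.arccos (tf s) := Real.arccos_nonneg _
  rw [max_eq_left (by linarith), smul_eq_mul]
  ring

lemma measure_inter_eq_discS (c p : EuclideanSpace ℝ (Fin 2)) {R : ℝ} (hR : R = dist p c)
    (hRpos : 0 < R) {r_c : ℝ} (hrc : 0 ≤ r_c) {r : ℝ} (hr : 0 ≤ r) :
    volume ({x : EuclideanSpace ℝ (Fin 2) | dist x p ≤ r} ∩ Metric.closedBall c r_c)
      = volume (discS R r_c r) := by
  have hRne : R ≠ 0 := hRpos.ne'
  set u : EuclideanSpace ℝ (Fin 2) := R⁻¹ • (c - p) with hu_def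
  have hcp : ‖c - p‖ = R := by
    rw [hR, dist_comm, dist_eq_norm]
  have hu : ‖u‖ = 1 := by
    rw [hu_def, norm_smul, hcp, norm_inv, Real.norm_eq_abs, abs_of_pos hRpos,
      inv_mul_cancel₀ hRne]
  -- orthonormal basis with `b 0 = u`
  have hcard : Module.finrank ℝ (EuclideanSpace ℝ (Fin 2)) = Fintype.card (Fin 2) := by
    simp [finrank_euclideanSpace]
  have horth : Orthonormal ℝ (({0} : Set (Fin 2)).restrict (fun _ => u)) := by
    constructor
    · intro i
      exact hu
    · intro i j hij
      exact absurd (Subsingleton.elim i j) hij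
  obtain ⟨b, hb⟩ := horth.exists_orthonormalBasis_extension_of_card_eq hcard
  have hb0 : b 0 = u := hb 0 (mem_singleton _)
  -- the measure-preserving map to ℝ × ℝ
  set Φ : EuclideanSpace ℝ (Fin 2) → ℝ × ℝ :=
    fun x => ((b.repr (x - p)) 0, (b.repr (x - p)) 1) with hΦdef
  have hΦmp : MeasurePreserving Φ volume volume := by
    have hcomp := (volume_preserving_finTwoArrow ℝ).comp
      ((EuclideanSpace.volume_preserving_symm_measurableEquiv_toLp (Fin 2)).comp
        (b.measurePreserving_repr.comp (measurePreserving_add_right volume (-p))))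
    have : Φ = (MeasurableEquiv.finTwoArrow ∘ (MeasurableEquiv.toLp 2 (Fin 2 → ℝ)).symm ∘
        (⇑b.repr ∘ fun x => x + -p)) := by
      funext x
      simp [hΦdef, sub_eq_add_neg,
        MeasurableEquiv.finTwoArrow]
    rw [this]
    exact hcomp
  -- images of `c - p`
  have hrepr_cp : b.repr (c - p) = R • EuclideanSpace.single 0 (1 : ℝ) := by
    have : c - p = R • u := by
      rw [hu_def, smul_smul, mul_inv_cancel₀ hRne, one_smul]
    rw [this, _root_.map_smul, ← hb0, b.repr_self]
  -- the set identity
  have hset : {x : EuclideanSpace ℝ (Fin 2) | dist x p ≤ r} ∩ Metric.closedBall c r_c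
      = Φ ⁻¹' (discS R r_c r) := by
    ext x
    have hnorm : ∀ z : EuclideanSpace ℝ (Fin 2), ‖z‖ = √(z 0 ^ 2 + z 1 ^ 2) := by
      intro z
      rw [EuclideanSpace.norm_eq]
      simp [Fin.sum_univ_two, sq_abs]
    have hsq : ∀ a ρ : ℝ, 0 ≤ a → 0 ≤ ρ → (√a ≤ ρ ↔ a ≤ ρ ^ 2) := by
      intro a ρ ha hρ
      rw [show ρ = √(ρ ^ 2) from (Real.sqrt_sq hρ).symm, Real.sqrt_le_sqrt_iff (by positivity)]
      rw [Real.sqrt_sq hρ]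
    have hd1 : dist x p = √((b.repr (x - p)) 0 ^ 2 + (b.repr (x - p)) 1 ^ 2) := by
      rw [dist_eq_norm, ← b.repr.norm_map (x - p), hnorm]
    have hd2 : dist x c
        = √(((b.repr (x - p)) 0 - R) ^ 2 + (b.repr (x - p)) 1 ^ 2) := by
      rw [dist_eq_norm, ← b.repr.norm_map (x - c),
        show x - c = (x - p) - (c - p) by abel, map_sub, hrepr_cp, hnorm]
      congr 2 <;> simp [EuclideanSpace.single_apply]
    simp only [mem_inter_iff, mem_setOf_eq, Metric.mem_closedBall, mem_preimage, hΦdef,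
      discS]
    rw [hd1, hd2, hsq _ r (by positivity) hr, hsq _ r_c (by positivity) hrc]
  rw [hset, hΦmp.measure_preimage (measurableSet_discS R r_c r).nullMeasurableSet]

end UDDAux

/-- Lemma 1 of the paper, case `R ≤ r_c`, large-distance regime.
Let `X` be a point uniformly distributed on the closed disk of center `c` and radius `r_c`
in `ℝ²`. If the reference point `p` lies inside the disk (`0 < R := dist p c ≤ r_c`), then
the CDF `F r = P(dist X p ≤ r)` is differentiable at every `r ∈ (r_c − R, r_c + R)` with
derivative `(2 r / (π r_c²)) · arccos ((R² + r² − r_c²) / (2 R r))`. -/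
theorem uniform_disk_distance_density_inside_large
    (c p : EuclideanSpace ℝ (Fin 2)) (r_c : ℝ) (hrc : 0 < r_c)
    (R : ℝ) (hR : R = dist p c) (hin : R ≤ r_c) (hRpos : 0 < R)
    (μ : Measure (EuclideanSpace ℝ (Fin 2)))
    (hμ : μ = (ENNReal.ofReal (π * r_c ^ 2))⁻¹ •
      (volume.restrict (Metric.closedBall c r_c)))
    (F : ℝ → ℝ) (hF : ∀ r, F r = (μ {x | dist x p ≤ r}).toReal)
    (r : ℝ) (hr₁ : r_c - R < r) (hr₂ : r < r_c + R) :
    HasDerivAt F (2 * r / (π * r_c ^ 2) *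
      Real.arccos ((R ^ 2 + r ^ 2 - r_c ^ 2) / (2 * R * r))) r := by
  have hrpos : 0 < r := by linarith
  have hπ : 0 < π * r_c ^ 2 := by positivity
  set φ : ℝ → ℝ := fun s => 2 * s * Real.arccos ((R ^ 2 + s ^ 2 - r_c ^ 2) / (2 * R * s))
    with hφdef
  have hFeq : ∀ r', r_c - R < r' →
      F r' = (π * r_c ^ 2)⁻¹ * (volume (discS R r_c r')).toReal := by
    intro r' hr'
    have hr'0 : 0 ≤ r' := by linarith
    rw [hF, hμ, Measure.smul_apply, Measure.restrict_apply
        (show MeasurableSet {x : EuclideanSpace ℝ (Fin 2) | dist x p ≤ r'} from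
          measurableSet_le (by fun_prop) measurable_const),
      measure_inter_eq_discS c p hR hRpos hrc.le hr'0, smul_eq_mul, ENNReal.toReal_mul,
      ENNReal.toReal_inv, ENNReal.toReal_ofReal hπ.le]
  have hkey : ∀ r' ∈ Ioo (r_c - R) (r_c + R),
      F r' = F r + (π * r_c ^ 2)⁻¹ * ∫ s in r..r', φ s := by
    intro r' hr'
    rcases le_total r r' with h | h
    · have hd := discS_diff_integral R r_c hRpos hrc hin r r' hr₁ h hr'.2
      rw [hFeq r' hr'.1, hFeq r hr₁, ← hd]
      ring
    · have hd := discS_diff_integral R r_c hRpos hrc hin r' r hr'.1 h hr₂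
      rw [hFeq r' hr'.1, hFeq r hr₁, intervalIntegral.integral_symm, ← hd]
      ring
  have hφcont : ContinuousOn φ (Ioi 0) := by
    apply ContinuousOn.mul
    · exact (continuous_const.mul continuous_id).continuousOn
    · apply Real.continuous_arccos.comp_continuousOn
      apply ContinuousOn.div
      · fun_prop
      · fun_prop
      · intro s hs
        have hs' : (0 : ℝ) < s := hs
        positivity
  have hG : HasDerivAt (fun r' => ∫ s in r..r', φ s) (φ r) r := by
    apply intervalIntegral.integral_hasDerivAt_right
    · exact IntervalIntegrable.refl
    · exact hφcont.stronglyMeasurableAtFilter isOpen_Ioi r hrpos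
    · exact hφcont.continuousAt (isOpen_Ioi.mem_nhds hrpos)
  have hD : HasDerivAt (fun r' => F r + (π * r_c ^ 2)⁻¹ * ∫ s in r..r', φ s)
      ((π * r_c ^ 2)⁻¹ * φ r) r := (hG.const_mul _).const_add _
  have hEv : F =ᶠ[nhds r] (fun r' => F r + (π * r_c ^ 2)⁻¹ * ∫ s in r..r', φ s) := by
    filter_upwards [isOpen_Ioo.mem_nhds (show r ∈ Ioo (r_c - R) (r_c + R) from ⟨hr₁, hr₂⟩)]
      with x hx
    exact hkey x hx
  have hfinal := hD.congr_of_eventuallyEq hEv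
  refine hfinal.congr_deriv ?_
  rw [hφdef]
  ring
end

section
/- Let a, b ∈ ℝ² with L := dist(a, b) > 0, let r > 0, and let [a, b] denote the closed line segment joining a and b. For every point P ∈ ℝ² with infDist(P, [a, b]) = r, one has dist(a, P) + dist(P, b) ≤ L + 2r. Moreover, equality holds for the point P₁ = b + (r/L)·(b − a), which lies on the extension of the segment beyond b and satisfies infDist(P₁, [a, b]) = r. -/
open Real Metric

lemma seg_compact {a b : EuclideanSpace ℝ (Fin 2)} : IsCompact (segment ℝ a b) := by
  rw [← convexHull_pair]
  exact ((Set.finite_singleton b).insert a).isCompact_convexHull (𝕜 := ℝ)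

/-- Remark 3, Fig. 7(b): longest detour.
Among all points `P` at distance `r` from the segment `[a, b]` (of length `L > 0`), the
detour length `dist a P + dist P b` is at most `L + 2r`, with equality at the point
`P₁ = b + (r/L) • (b − a)` on the extension of the segment beyond `b`; moreover `P₁`
indeed lies at distance `r` from the segment. -/
theorem longest_detour_segment
    (a b : EuclideanSpace ℝ (Fin 2)) (L : ℝ) (hL : L = dist a b) (hLpos : 0 < L)
    (r : ℝ) (hr : 0 < r) :
    (∀ P : EuclideanSpace ℝ (Fin 2), Metric.infDist P (segment ℝ a b) = r →
      dist a P + dist P b ≤ L + 2 * r) ∧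
    (Metric.infDist (b + (r / L) • (b - a)) (segment ℝ a b) = r ∧
      dist a (b + (r / L) • (b - a)) + dist (b + (r / L) • (b - a)) b = L + 2 * r) := by
  have hne : (segment ℝ a b).Nonempty := ⟨a, left_mem_segment ℝ a b⟩
  have hLne : L ≠ 0 := ne_of_gt hLpos
  constructor
  · intro P hP
    obtain ⟨Q, hQmem, hQd⟩ := seg_compact.exists_infDist_eq_dist hne P
    rw [hP] at hQd
    have hsum : dist a Q + dist Q b = L := by
      rw [hL]; exact dist_add_dist_of_mem_segment hQmem
    have h1 : dist a P ≤ dist a Q + r := by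
      calc dist a P ≤ dist a Q + dist Q P := dist_triangle a Q P
        _ = dist a Q + r := by rw [dist_comm Q P, ← hQd]
    have h2 : dist P b ≤ r + dist Q b := by
      calc dist P b ≤ dist P Q + dist Q b := dist_triangle P Q b
        _ = r + dist Q b := by rw [← hQd]
    linarith
  · set P₁ : EuclideanSpace ℝ (Fin 2) := b + (r / L) • (b - a) with hP₁
    have hdPb : dist P₁ b = r := by
      rw [dist_eq_norm]
      have : P₁ - b = (r / L) • (b - a) := by rw [hP₁]; abel
      rw [this, norm_smul, Real.norm_eq_abs, abs_of_pos (div_pos hr hLpos),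
        ← dist_eq_norm, dist_comm b a, ← hL]
      field_simp
    have hdaP : dist a P₁ = L + r := by
      rw [dist_eq_norm]
      have : a - P₁ = -((1 + r / L) • (b - a)) := by
        rw [hP₁, add_smul, one_smul]; abel
      rw [this, norm_neg, norm_smul, Real.norm_eq_abs,
        abs_of_pos (by positivity : (0:ℝ) < 1 + r / L),
        ← dist_eq_norm, dist_comm b a, ← hL]
      field_simp
    refine ⟨?_, by rw [hdaP, hdPb]; ring⟩
    apply le_antisymm
    · calc Metric.infDist P₁ (segment ℝ a b) ≤ dist P₁ b :=
            Metric.infDist_le_dist_of_mem (right_mem_segment ℝ a b)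
        _ = r := hdPb
    · obtain ⟨Q, hQmem, hQd⟩ := seg_compact.exists_infDist_eq_dist hne P₁
      rw [hQd]
      have hsum : dist a Q + dist Q b = L := by
        rw [hL]; exact dist_add_dist_of_mem_segment hQmem
      have hQnn : 0 ≤ dist Q b := dist_nonneg
      have htri : dist a P₁ ≤ dist a Q + dist Q P₁ := dist_triangle a Q P₁
      rw [hdaP] at htri
      rw [dist_comm]
      linarith
end
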